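/- If R ⊆ S ⊆ Γ(R,I) are subrings of the fraction field of a domain R, then Γ(R,I) = Γ(S, S·I), where S·I is the ideal of S generated by I. -/

import Mathlib

noncomputable section

def locAt (R K : Type) [CommRing R] [Field K] [Algebra R K] (r : R) : Subring K :=
  (Algebra.adjoin R {(algebraMap R K r)⁻¹}).toSubring

def Gamma (R K : Type) [CommRing R] [Field K] [Algebra R K] (I : Ideal R) : Set K :=
  ⋂ (r : R) (_ : r ∈ I) (_ : r ≠ 0), (locAt R K r : Set K)

/-- The ideal `S·I` of the subring `S ⊆ K` generated by (the image of) the ideal `I` of `R`. -/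
def idealOf (R K : Type) [CommRing R] [Field K] [Algebra R K] (S : Subring K) (I : Ideal R) :
    Ideal S :=
  Ideal.span {s : S | ∃ r ∈ I, (s : K) = algebraMap R K r}

/-- `Γ(S,J) = ⋂_{s ∈ J, s ≠ 0} S[s⁻¹]` for a subring `S` of `K` and an ideal `J` of `S`. -/
def GammaS (K : Type) [Field K] (S : Subring K) (J : Ideal S) : Set K :=
  ⋂ (s : S) (_ : s ∈ J) (_ : (s : K) ≠ 0),
    (Subring.closure ((S : Set K) ∪ {(s : K)⁻¹}) : Set K)

lemma exists_pow_mul_mem (R K : Type) [CommRing R] [Field K] [Algebra R K]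
    (S : Subring K) (h1 : Set.range (algebraMap R K) ⊆ (S : Set K)) (u : K)
    (hu : u ∈ S) (hu0 : u ≠ 0) (x : K) (hx : x ∈ Algebra.adjoin R {u⁻¹}) :
    ∃ N : ℕ, x * u ^ N ∈ S := by
  induction hx using Algebra.adjoin_induction with
  | mem z hz =>
    refine ⟨1, ?_⟩
    rcases hz with rfl
    rw [pow_one, inv_mul_cancel₀ hu0]
    exact one_mem S
  | algebraMap r => exact ⟨0, by simpa using h1 ⟨r, rfl⟩⟩
  | add a b ha hb iha ihb =>
    obtain ⟨N1, hN1⟩ := iha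
    obtain ⟨N2, hN2⟩ := ihb
    refine ⟨N1 + N2, ?_⟩
    have : (a + b) * u ^ (N1 + N2) = (a * u ^ N1) * u ^ N2 + (b * u ^ N2) * u ^ N1 := by
      ring
    rw [this]
    exact add_mem (mul_mem hN1 (pow_mem hu N2)) (mul_mem hN2 (pow_mem hu N1))
  | mul a b ha hb iha ihb =>
    obtain ⟨N1, hN1⟩ := iha
    obtain ⟨N2, hN2⟩ := ihb
    refine ⟨N1 + N2, ?_⟩
    have : (a * b) * u ^ (N1 + N2) = (a * u ^ N1) * (b * u ^ N2) := by ring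
    rw [this]
    exact mul_mem hN1 hN2

/-- If `R ⊆ S ⊆ Γ(R,I)` are subrings of the fraction field of the domain `R`,
then `Γ(R,I) = Γ(S, S·I)`. -/
theorem gamma_eq_gamma_intermediate (R K : Type) [CommRing R] [IsDomain R] [Field K] [Algebra R K]
    [IsFractionRing R K] (I : Ideal R) (S : Subring K)
    (h1 : Set.range (algebraMap R K) ⊆ (S : Set K)) (h2 : (S : Set K) ⊆ Gamma R K I) :
    Gamma R K I = GammaS K S (idealOf R K S I) := by
  have hinj : Function.Injective (algebraMap R K) := IsFractionRing.injective R K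
  apply Set.Subset.antisymm
  · intro x hx
    refine Set.mem_iInter.2 fun s => Set.mem_iInter.2 fun hs => Set.mem_iInter.2 fun hs0 => ?_
    -- the "conductor" ideal
    set J : Ideal S :=
      { carrier := {t : S | x * (t : K) ∈ S}
        add_mem' := fun {a b} ha hb => by
          simp only [Set.mem_setOf_eq, Subring.coe_add, mul_add] at *
          exact add_mem ha hb
        zero_mem' := by simp only [Set.mem_setOf_eq, Subring.coe_zero, mul_zero]; exact zero_mem S
        smul_mem' := fun c t ht => by
          simp only [Set.mem_setOf_eq, smul_eq_mul, Subring.coe_mul] at *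
          have : x * ((c : K) * (t : K)) = (c : K) * (x * (t : K)) := by ring
          rw [this]
          exact mul_mem c.2 ht } with hJ
    have hgen : {t : S | ∃ r ∈ I, (t : K) = algebraMap R K r} ⊆ (J.radical : Set S) := by
      rintro t ⟨r, hrI, hrt⟩
      by_cases hr0 : r = 0
      · have : t = 0 := by
          ext
          simpa [hr0] using hrt
        rw [this]
        exact Ideal.radical_mono bot_le (by simp)
      · have hxr : x ∈ Algebra.adjoin R {(algebraMap R K r)⁻¹} := by
          have := Set.mem_iInter.1 (Set.mem_iInter.1 (Set.mem_iInter.1 hx r) hrI) hr0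
          exact this
        have humem : algebraMap R K r ∈ S := h1 ⟨r, rfl⟩
        have hu0 : algebraMap R K r ≠ 0 := fun h => hr0 (hinj (by simpa using h))
        obtain ⟨N, hN⟩ := exists_pow_mul_mem R K S h1 _ humem hu0 x hxr
        refine ⟨N, ?_⟩
        show x * ((t ^ N : S) : K) ∈ S
        push_cast
        rw [hrt]
        exact hN
    have hsrad : s ∈ J.radical := (Ideal.span_le.2 hgen) hs
    obtain ⟨n, hn⟩ := hsrad
    have hxs : x * ((s : K)) ^ n ∈ S := by
      have : x * ((s ^ n : S) : K) ∈ S := hn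
      push_cast at this
      exact this
    have hxeq : x = (x * (s : K) ^ n) * ((s : K)⁻¹) ^ n := by
      rw [mul_assoc, ← mul_pow, mul_inv_cancel₀ hs0, one_pow, mul_one]
    rw [hxeq]
    have hmem1 : (x * (s : K) ^ n) ∈ Subring.closure ((S : Set K) ∪ {(s : K)⁻¹}) :=
      Subring.subset_closure (Or.inl hxs)
    have hmem2 : ((s : K)⁻¹) ∈ Subring.closure ((S : Set K) ∪ {(s : K)⁻¹}) :=
      Subring.subset_closure (Or.inr rfl)
    exact mul_mem hmem1 (pow_mem hmem2 n)
  · intro x hx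
    refine Set.mem_iInter.2 fun r => Set.mem_iInter.2 fun hrI => Set.mem_iInter.2 fun hr0 => ?_
    have humem : algebraMap R K r ∈ S := h1 ⟨r, rfl⟩
    set s : S := ⟨algebraMap R K r, humem⟩ with hsdef
    have hsI : s ∈ idealOf R K S I := Ideal.subset_span ⟨r, hrI, rfl⟩
    have hs0 : (s : K) ≠ 0 := fun h => hr0 (hinj (by rw [map_zero]; exact h))
    have hx' : x ∈ Subring.closure ((S : Set K) ∪ {(s : K)⁻¹}) :=
      Set.mem_iInter.1 (Set.mem_iInter.1 (Set.mem_iInter.1 hx s) hsI) hs0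
    refine Subring.closure_le.2 ?_ hx'
    rintro y (hyS | hy)
    · exact Set.mem_iInter.1 (Set.mem_iInter.1 (Set.mem_iInter.1 (h2 hyS) r) hrI) hr0
    · rcases hy with rfl
      exact Algebra.subset_adjoin rfl
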